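/- (Buchdahl inequality.) Let (m(r), p(r)) be a regular solution of the TOV system for an equation of state with dρ/dp ≥ 0, and for r in its domain set ℳ(r) = Gm(r)/(c²r) and 𝒫(r) = 4πG r² p(r)/c⁴. Then for every such r, (3ℳ + 𝒫)² ≤ 2(2ℳ + 𝒫). In particular ℳ(r) ≤ 4/9 for all r, and if the solution has finite radius R and finite total mass M then 2GM/(c²R) ≤ 8/9. -/

import Mathlib

open Real Set Filter Topology

/-- The domain `(0, R)` of radii, where `R ∈ (0,∞]`. -/
def tovDomain (R : ENNReal) : Set ℝ := {r : ℝ | 0 < r ∧ ENNReal.ofReal r < R}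

/-- `(m, p)` is a solution of the TOV system on `(0, R)` with `p > 0`, `m > 0` and
`2Gm < c²r`. -/
def IsTOVSolution (G c : ℝ) (ρ m p : ℝ → ℝ) (R : ENNReal) : Prop :=
  ∀ r ∈ tovDomain R,
    0 < p r ∧ 0 < m r ∧ 2 * G * m r < c ^ 2 * r ∧
    HasDerivAt m (4 * Real.pi * r ^ 2 * ρ (p r)) r ∧
    HasDerivAt p (-(G * m r * ρ (p r) / r ^ 2) * (1 + p r / (ρ (p r) * c ^ 2)) *
      (1 + 4 * Real.pi * r ^ 3 * p r / (m r * c ^ 2)) *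
      (1 - 2 * G * m r / (c ^ 2 * r))⁻¹) r

/-- `ρ` is a barotropic equation of state: continuous on `[0,∞)`, C² and positive on
`(0,∞)`, with `dρ/dp ≥ 0`. -/
def IsBarotropic (ρ : ℝ → ℝ) : Prop :=
  ContinuousOn ρ (Ici 0) ∧ ContDiffOn ℝ 2 ρ (Ioi 0) ∧
  (∀ q ≥ 0, 0 ≤ ρ q) ∧ (∀ q > 0, 0 < ρ q) ∧ (∀ q > 0, 0 ≤ deriv ρ q)

/-- The interval `(0, R)` is maximal: the solution admits no extension to a larger
interval. -/
def IsMaximalTOVSolution (G c : ℝ) (ρ m p : ℝ → ℝ) (R : ENNReal) : Prop :=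
  IsTOVSolution G c ρ m p R ∧
  ∀ (R' : ENNReal) (m' p' : ℝ → ℝ), R < R' → IsTOVSolution G c ρ m' p' R' →
    Set.EqOn m' m (tovDomain R) → ¬ Set.EqOn p' p (tovDomain R)

/-- A regular solution of the TOV system with central pressure `pc > 0`: a maximal
solution with `p(r) → pc` and `m(r)/r³ → (4π/3)ρ(pc)` as `r → 0⁺`. -/
def IsRegularTOVSolution (G c : ℝ) (ρ m p : ℝ → ℝ) (R : ENNReal) (pc : ℝ) : Prop :=
  IsMaximalTOVSolution G c ρ m p R ∧ 0 < pc ∧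
  Filter.Tendsto p (nhdsWithin 0 (Ioi 0)) (nhds pc) ∧
  Filter.Tendsto (fun r => m r / r ^ 3) (nhdsWithin 0 (Ioi 0))
    (nhds (4 * Real.pi / 3 * ρ pc))

lemma buch_C_pos (u v : ℝ) (hu : 0 < u) (hv : 0 < v)
    (hf : (3*u+v)^2 = 4*u+2*v) :
    0 < (6*(3*u+v) - 4)*(1-2*u) + 2*(u+v)*(1-(3*u+v)) := by
  have key : (6*(3*u+v) - 4)*(1-2*u) + 2*(u+v)*(1-(3*u+v)) = 4*((3*u+v)-1)^3 := by
    linear_combination (2 - 4*(3*u+v)) * hf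
  have h3 : 2*v = (3*u+v)*(3*(3*u+v)-4) := by linear_combination (-3)*hf
  have hs4 : 4/3 < 3*u+v := by nlinarith
  rw [key]
  have : 0 < (3*u+v) - 1 := by linarith
  positivity

lemma div_split (u v : ℝ) (h : 1 - 2*u ≠ 0) :
    6*(3*u+v) - 4 + 2*(u+v)*(1-(3*u+v))/(1-2*u)
      = ((6*(3*u+v) - 4)*(1-2*u) + 2*(u+v)*(1-(3*u+v)))/(1-2*u) := by
  exact add_div' _ _ _ h

lemma buch_small_neg (u v : ℝ) (hu : 0 < u) (hv : 0 < v) (hsum : u + v < 2/9) :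
    (3*u+v)^2 - 2*(2*u+v) < 0 := by nlinarith [sq_nonneg (u+v), mul_pos hu hv]

lemma M_bound (u v : ℝ) (hu : 0 < u) (hv : 0 < v)
    (hf : (3*u+v)^2 ≤ 2*(2*u+v)) : u ≤ 4/9 := by
  nlinarith [sq_nonneg v, mul_pos hu hv]

set_option maxHeartbeats 2000000 in
lemma tov_identity (r c G M P D : ℝ) (hr : r ≠ 0) (hc : c ≠ 0) (hM : M ≠ 0) (hD : D ≠ 0)
    (hden : c^2*r - 2*G*M ≠ 0) :
    2*(3*(G*M/(c^2*r)) + 4*π*G*r^2*P/c^4)*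
      (3*((G*(4*π*r^2*D)*(c^2*r) - G*M*c^2)/(c^2*r)^2) +
        (4*π*G*(2*r)*P + 4*π*G*r^2*
          (-(G*M*D/r^2)*(1+P/(D*c^2))*(1+4*π*r^3*P/(M*c^2))*(1-2*G*M/(c^2*r))⁻¹))/c^4)
    - 2*(2*((G*(4*π*r^2*D)*(c^2*r) - G*M*c^2)/(c^2*r)^2) +
        (4*π*G*(2*r)*P + 4*π*G*r^2*
          (-(G*M*D/r^2)*(1+P/(D*c^2))*(1+4*π*r^3*P/(M*c^2))*(1-2*G*M/(c^2*r))⁻¹))/c^4)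
    = ((4*π*G*r^2*D/c^2 - 3*(G*M/(c^2*r))) *
        (6*(3*(G*M/(c^2*r)) + 4*π*G*r^2*P/c^4) - 4 +
          2*((G*M/(c^2*r)) + 4*π*G*r^2*P/c^4)*(1-(3*(G*M/(c^2*r)) + 4*π*G*r^2*P/c^4))/
            (1-2*(G*M/(c^2*r))))
      + ((3*(G*M/(c^2*r)) + 4*π*G*r^2*P/c^4)^2 - 2*(2*(G*M/(c^2*r)) + 4*π*G*r^2*P/c^4))*
        (2 - 2*(3*(G*M/(c^2*r)) + 4*π*G*r^2*P/c^4)/(1-2*(G*M/(c^2*r)))))/r := by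
  have hcr : c^2*r ≠ 0 := by
    intro h; rcases mul_eq_zero.1 h with h'|h'
    · exact hc (pow_eq_zero_iff (n := 2) (by norm_num) |>.1 h')
    · exact hr h'
  have hinv : (1 - 2*G*M/(c^2*r))⁻¹ = (c^2*r)/(c^2*r - 2*G*M) := by
    rw [show 1 - 2*G*M/(c^2*r) = (c^2*r - 2*G*M)/(c^2*r) by field_simp, inv_div]
  have hone : 1 - 2*(G*M/(c^2*r)) = (c^2*r - 2*G*M)/(c^2*r) := by field_simp
  rw [hinv, hone, div_div_eq_mul_div, div_div_eq_mul_div]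
  set K := c^2*r - 2*G*M with hK
  have hKne : K ≠ 0 := hden
  field_simp
  rw [hK]
  ring

/-- domain is downward closed -/
lemma tovDomain_down {R : ENNReal} {r x : ℝ} (hr : r ∈ tovDomain R) (hx : 0 < x)
    (hxr : x ≤ r) : x ∈ tovDomain R :=
  ⟨hx, lt_of_le_of_lt (ENNReal.ofReal_le_ofReal hxr) hr.2⟩

/-- the density decreasing estimate: `q ≤ 3u`. -/
lemma q_le_3u (G c : ℝ) (hG : 0 < G) (hc : 0 < c) (ρ m p : ℝ → ℝ) (R : ENNReal) (pc : ℝ)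
    (hρ : IsBarotropic ρ)
    (hTOV : IsTOVSolution G c ρ m p R)
    (hpc : 0 < pc)
    (hplim : Tendsto p (𝓝[>] 0) (𝓝 pc))
    (hmlim : Tendsto (fun r => m r / r ^ 3) (𝓝[>] 0) (𝓝 (4 * Real.pi / 3 * ρ pc))) :
    ∀ r ∈ tovDomain R, 4*π*G*r^2*ρ (p r)/c^2 ≤ 3*(G*m r/(c^2*r)) := by
  obtain ⟨hρcont, hρC2, hρnn, hρpos, hρder⟩ := hρ
  set H : ℝ → ℝ := fun x => m x - 4*π/3*x^3*ρ (p x) with hHdef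
  -- derivative of H
  have hρdiffAt : ∀ q : ℝ, 0 < q → HasDerivAt ρ (deriv ρ q) q := by
    intro q hq
    have hd : DifferentiableOn ℝ ρ (Ioi 0) := hρC2.differentiableOn (by norm_num)
    exact ((hd q hq).differentiableAt (Ioi_mem_nhds hq)).hasDerivAt
  have hHd : ∀ x ∈ tovDomain R, ∃ d : ℝ, 0 ≤ d ∧ HasDerivAt H d x := by
    intro x hx
    obtain ⟨hp, hm, hlt, hdm, hdp⟩ := hTOV x hx
    have hx0 : 0 < x := hx.1
    have hρp : 0 < ρ (p x) := hρpos _ hp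
    have hcomp : HasDerivAt (fun y => ρ (p y))
        (deriv ρ (p x) * (-(G * m x * ρ (p x) / x ^ 2) * (1 + p x / (ρ (p x) * c ^ 2)) *
          (1 + 4 * π * x ^ 3 * p x / (m x * c ^ 2)) *
          (1 - 2 * G * m x / (c ^ 2 * x))⁻¹)) x := by
      exact (hρdiffAt (p x) hp).comp x hdp
    have h3 : HasDerivAt (fun y : ℝ => 4*π/3*y^3) (4*π/3*(3*x^2)) x := by
      have := (hasDerivAt_pow 3 x).const_mul (4*π/3)
      exact this.congr_deriv (by push_cast; ring)
    have hHd' : HasDerivAt H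
        (4 * π * x ^ 2 * ρ (p x) - (4*π/3*(3*x^2) * ρ (p x) + 4*π/3*x^3 *
          (deriv ρ (p x) * (-(G * m x * ρ (p x) / x ^ 2) * (1 + p x / (ρ (p x) * c ^ 2)) *
            (1 + 4 * π * x ^ 3 * p x / (m x * c ^ 2)) *
            (1 - 2 * G * m x / (c ^ 2 * x))⁻¹)))) x := hdm.sub (h3.mul hcomp)
    refine ⟨_, ?_, hHd'⟩
    -- nonnegativity of the derivative
    have hA : 0 < G * m x * ρ (p x) / x ^ 2 := by positivity
    have hB : 0 < 1 + p x / (ρ (p x) * c ^ 2) := by positivity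
    have hC : 0 < 1 + 4 * π * x ^ 3 * p x / (m x * c ^ 2) := by positivity
    have hmet : 0 < 1 - 2 * G * m x / (c ^ 2 * x) := by
      rw [sub_pos, div_lt_one (by positivity)]
      linarith
    have hD : 0 < (1 - 2 * G * m x / (c ^ 2 * x))⁻¹ := inv_pos.2 hmet
    have hp'le : -(G * m x * ρ (p x) / x ^ 2) * (1 + p x / (ρ (p x) * c ^ 2)) *
        (1 + 4 * π * x ^ 3 * p x / (m x * c ^ 2)) *
        (1 - 2 * G * m x / (c ^ 2 * x))⁻¹ ≤ 0 := by
      nlinarith [mul_pos (mul_pos (mul_pos hA hB) hC) hD]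
    have hder : 0 ≤ deriv ρ (p x) := hρder _ hp
    have : 4*π/3*x^3 * (deriv ρ (p x) * (-(G * m x * ρ (p x) / x ^ 2) *
        (1 + p x / (ρ (p x) * c ^ 2)) * (1 + 4 * π * x ^ 3 * p x / (m x * c ^ 2)) *
        (1 - 2 * G * m x / (c ^ 2 * x))⁻¹)) ≤ 0 := by
      apply mul_nonpos_of_nonneg_of_nonpos (by positivity)
      exact mul_nonpos_of_nonneg_of_nonpos hder hp'le
    nlinarith []
  -- H tends to 0 at 0+
  have hHlim : Tendsto H (𝓝[>] (0:ℝ)) (𝓝 0) := by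
    have t1 : Tendsto (fun x : ℝ => x^3) (𝓝[>](0:ℝ)) (𝓝 0) := by
      have h := (continuous_pow 3).tendsto (0:ℝ)
      simpa using h.mono_left nhdsWithin_le_nhds
    have t2 : Tendsto (fun x => x^3 * (m x / x^3)) (𝓝[>](0:ℝ))
        (𝓝 (0 * (4 * π / 3 * ρ pc))) := t1.mul hmlim
    have hρcA : ContinuousAt ρ pc :=
      (hρC2.continuousOn (x := pc) hpc).continuousAt (Ioi_mem_nhds hpc)
    have t3 : Tendsto (fun x => ρ (p x)) (𝓝[>](0:ℝ)) (𝓝 (ρ pc)) :=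
      hρcA.tendsto.comp hplim
    have t4 : Tendsto (fun x => 4*π/3*x^3*ρ (p x)) (𝓝[>](0:ℝ))
        (𝓝 (4*π/3*0*ρ pc)) := by
      have := ((t1.const_mul (4*π/3)).mul t3)
      convert this using 2 <;> ring
    have t5 := t2.sub t4
    have t6 : Tendsto H (𝓝[>](0:ℝ)) (𝓝 (0 * (4 * π / 3 * ρ pc) - 4*π/3*0*ρ pc)) := by
      apply t5.congr'
      filter_upwards [self_mem_nhdsWithin] with x hx
      have hx3 : (x:ℝ)^3 ≠ 0 := pow_ne_zero 3 (ne_of_gt hx)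
      have hx0 : x ≠ 0 := ne_of_gt hx
      simp only [hHdef]
      field_simp
    convert t6 using 2
    ring
  -- H is nonneg on the domain
  have hHnn : ∀ b ∈ tovDomain R, 0 ≤ H b := by
    intro b hb
    have hb0 : 0 < b := hb.1
    refine le_of_tendsto hHlim ?_
    filter_upwards [Ioo_mem_nhdsGT_of_mem (Set.mem_Ico.2 ⟨le_refl 0, hb0⟩)] with a ha
    -- H a ≤ H b via monotonicity on [a, b]
    have hsub : Icc a b ⊆ tovDomain R := fun x hx =>
      tovDomain_down hb (lt_of_lt_of_le ha.1 hx.1) hx.2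
    have hmono : MonotoneOn H (Icc a b) := by
      apply monotoneOn_of_deriv_nonneg (convex_Icc a b)
      · intro x hx
        obtain ⟨d, _, hd⟩ := hHd x (hsub hx)
        exact hd.continuousAt.continuousWithinAt
      · intro x hx
        rw [interior_Icc] at hx
        obtain ⟨d, _, hd⟩ := hHd x (hsub (Ioo_subset_Icc_self hx))
        exact hd.differentiableAt.differentiableWithinAt
      · intro x hx
        rw [interior_Icc] at hx
        obtain ⟨d, hd0, hd⟩ := hHd x (hsub (Ioo_subset_Icc_self hx))
        rw [hd.deriv]; exact hd0
    exact hmono (Set.mem_Icc.2 ⟨le_refl a, ha.2.le⟩) (Set.mem_Icc.2 ⟨ha.2.le, le_refl b⟩)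
      ha.2.le
  -- conclude
  intro r hr
  have hr0 : 0 < r := hr.1
  obtain ⟨hp, hm, hlt, _, _⟩ := hTOV r hr
  have h0 := hHnn r hr
  simp only [hHdef] at h0
  have hρp : 0 < ρ (p r) := hρpos _ hp
  rw [show 3*(G*m r/(c^2*r)) = (3*(G*m r))/(c^2*r) by ring,
    div_le_div_iff₀ (by positivity) (by positivity)]
  nlinarith [mul_le_mul_of_nonneg_left (by linarith : 4*π/3*r^3*ρ (p r) ≤ m r)
    (by positivity : (0:ℝ) ≤ 3*G*c^2)]

set_option maxHeartbeats 4000000 in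
lemma key_neg (G c : ℝ) (hG : 0 < G) (hc : 0 < c) (ρ m p : ℝ → ℝ) (R : ENNReal) (pc : ℝ)
    (hρ : IsBarotropic ρ) (hTOV : IsTOVSolution G c ρ m p R) (hpc : 0 < pc)
    (hplim : Tendsto p (𝓝[>] 0) (𝓝 pc))
    (hmlim : Tendsto (fun r => m r / r ^ 3) (𝓝[>] 0) (𝓝 (4 * Real.pi / 3 * ρ pc))) :
    ∀ r ∈ tovDomain R,
      (3 * (G * m r / (c ^ 2 * r)) + 4 * π * G * r ^ 2 * p r / c ^ 4) ^ 2 -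
        2 * (2 * (G * m r / (c ^ 2 * r)) + 4 * π * G * r ^ 2 * p r / c ^ 4) ≤ 0 := by
  obtain ⟨hρcont, hρC2, hρnn, hρpos, hρder⟩ := hρ
  have hq3u := q_le_3u G c hG hc ρ m p R pc ⟨hρcont, hρC2, hρnn, hρpos, hρder⟩
    hTOV hpc hplim hmlim
  set f : ℝ → ℝ := fun x =>
    (3 * (G * m x / (c ^ 2 * x)) + 4 * π * G * x ^ 2 * p x / c ^ 4) ^ 2 -
      2 * (2 * (G * m x / (c ^ 2 * x)) + 4 * π * G * x ^ 2 * p x / c ^ 4) with hfdef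
  set CC : ℝ → ℝ := fun x =>
    6*(3*(G*m x/(c^2*x)) + 4*π*G*x^2*p x/c^4) - 4 +
      2*((G*m x/(c^2*x)) + 4*π*G*x^2*p x/c^4)*(1-(3*(G*m x/(c^2*x)) + 4*π*G*x^2*p x/c^4))/
        (1-2*(G*m x/(c^2*x))) with hCCdef
  set DF : ℝ → ℝ := fun x =>
    ((4*π*G*x^2*ρ (p x)/c^2 - 3*(G*m x/(c^2*x))) * CC x
      + f x * (2 - 2*(3*(G*m x/(c^2*x)) + 4*π*G*x^2*p x/c^4)/(1-2*(G*m x/(c^2*x)))))/x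
    with hDFdef
  set Kf : ℝ → ℝ := fun x =>
    (2 - 2*(3*(G*m x/(c^2*x)) + 4*π*G*x^2*p x/c^4)/(1-2*(G*m x/(c^2*x))))/x with hKdef
  -- basic positivity facts
  have hu_pos : ∀ x ∈ tovDomain R, 0 < G * m x / (c ^ 2 * x) := by
    intro x hx
    have hm := (hTOV x hx).2.1
    have hx0 := hx.1
    exact div_pos (mul_pos hG hm) (by positivity)
  have hv_pos : ∀ x ∈ tovDomain R, 0 < 4 * π * G * x ^ 2 * p x / c ^ 4 := by
    intro x hx
    have hp := (hTOV x hx).1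
    have hx0 := hx.1
    exact div_pos (by positivity) (by positivity)
  have h2u_lt : ∀ x ∈ tovDomain R, 2 * (G * m x / (c ^ 2 * x)) < 1 := by
    intro x hx
    have hlt := (hTOV x hx).2.2.1
    have hx0 := hx.1
    rw [show 2*(G*m x/(c^2*x)) = (2*(G*m x))/(c^2*x) by ring, div_lt_one (by positivity)]
    linarith
  -- the derivative of f
  have hderiv : ∀ x ∈ tovDomain R, HasDerivAt f (DF x) x := by
    intro x hx
    obtain ⟨hp, hm, hlt, hdm, hdp⟩ := hTOV x hx
    have hx0 : 0 < x := hx.1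
    have hρp : 0 < ρ (p x) := hρpos _ hp
    have hden : 0 < c^2*x - 2*G*m x := by linarith
    have hcr : (c^2*x) ≠ 0 := by positivity
    have hud : HasDerivAt (fun y => G * m y / (c ^ 2 * y))
        ((G*(4*π*x^2*ρ (p x))*(c^2*x) - G*m x*c^2)/(c^2*x)^2) x := by
      have h1 : HasDerivAt (fun y => G * m y) (G * (4*π*x^2*ρ (p x))) x := hdm.const_mul G
      have h2 : HasDerivAt (fun y : ℝ => c^2*y) (c^2) x := by
        simpa using (hasDerivAt_id x).const_mul (c^2)
      exact h1.div h2 hcr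
    have hvd : HasDerivAt (fun y => 4*π*G*y^2*p y/c^4)
        ((4*π*G*(2*x)*p x + 4*π*G*x^2*
          (-(G * m x * ρ (p x) / x ^ 2) * (1 + p x / (ρ (p x) * c ^ 2)) *
          (1 + 4 * π * x ^ 3 * p x / (m x * c ^ 2)) *
          (1 - 2 * G * m x / (c ^ 2 * x))⁻¹))/c^4) x := by
      have h3 : HasDerivAt (fun y : ℝ => 4*π*G*y^2) (4*π*G*(2*x)) x := by
        have := (hasDerivAt_pow 2 x).const_mul (4*π*G)
        exact this.congr_deriv (by push_cast; ring)
      exact (h3.mul hdp).div_const (c^4)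
    have h5 : HasDerivAt (fun y => 3*(G * m y / (c ^ 2 * y)) + 4*π*G*y^2*p y/c^4)
        (3*((G*(4*π*x^2*ρ (p x))*(c^2*x) - G*m x*c^2)/(c^2*x)^2) +
         (4*π*G*(2*x)*p x + 4*π*G*x^2*
          (-(G * m x * ρ (p x) / x ^ 2) * (1 + p x / (ρ (p x) * c ^ 2)) *
          (1 + 4 * π * x ^ 3 * p x / (m x * c ^ 2)) *
          (1 - 2 * G * m x / (c ^ 2 * x))⁻¹))/c^4) x := (hud.const_mul 3).add hvd
    have h7 : HasDerivAt (fun y => 2*(2*(G * m y / (c ^ 2 * y)) + 4*π*G*y^2*p y/c^4))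
        (2*(2*((G*(4*π*x^2*ρ (p x))*(c^2*x) - G*m x*c^2)/(c^2*x)^2) +
         (4*π*G*(2*x)*p x + 4*π*G*x^2*
          (-(G * m x * ρ (p x) / x ^ 2) * (1 + p x / (ρ (p x) * c ^ 2)) *
          (1 + 4 * π * x ^ 3 * p x / (m x * c ^ 2)) *
          (1 - 2 * G * m x / (c ^ 2 * x))⁻¹))/c^4)) x :=
      ((hud.const_mul 2).add hvd).const_mul 2
    have h8 := (h5.pow 2).sub h7
    have h9 : HasDerivAt f
        (2*(3*(G*m x/(c^2*x)) + 4*π*G*x^2*p x/c^4)*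
          (3*((G*(4*π*x^2*ρ (p x))*(c^2*x) - G*m x*c^2)/(c^2*x)^2) +
            (4*π*G*(2*x)*p x + 4*π*G*x^2*
              (-(G*m x*ρ (p x)/x^2)*(1+p x/(ρ (p x)*c^2))*(1+4*π*x^3*p x/(m x*c^2))*
                (1-2*G*m x/(c^2*x))⁻¹))/c^4)
        - 2*(2*((G*(4*π*x^2*ρ (p x))*(c^2*x) - G*m x*c^2)/(c^2*x)^2) +
            (4*π*G*(2*x)*p x + 4*π*G*x^2*
              (-(G*m x*ρ (p x)/x^2)*(1+p x/(ρ (p x)*c^2))*(1+4*π*x^3*p x/(m x*c^2))*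
                (1-2*G*m x/(c^2*x))⁻¹))/c^4)) x := by
      rw [hfdef]
      exact h8.congr_deriv (by push_cast; ring)
    have hval := tov_identity x c G (m x) (p x) (ρ (p x)) hx0.ne' hc.ne' hm.ne' hρp.ne'
      hden.ne'
    simpa only [hDFdef, hCCdef] using hval ▸ h9
  -- pointwise differential inequality
  have hDFle : ∀ x ∈ tovDomain R, 0 ≤ CC x → 0 ≤ f x → DF x ≤ f x * Kf x := by
    intro x hx hCC hf
    have hx0 : 0 < x := hx.1
    have h1 : (4*π*G*x^2*ρ (p x)/c^2 - 3*(G*m x/(c^2*x))) * CC x ≤ 0 :=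
      mul_nonpos_of_nonpos_of_nonneg (sub_nonpos.2 (hq3u x hx)) hCC
    have h2 : ((4*π*G*x^2*ρ (p x)/c^2 - 3*(G*m x/(c^2*x))) * CC x
        + f x * (2 - 2*(3*(G*m x/(c^2*x)) + 4*π*G*x^2*p x/c^4)/(1-2*(G*m x/(c^2*x)))))/x
        ≤ (f x * (2 - 2*(3*(G*m x/(c^2*x)) + 4*π*G*x^2*p x/c^4)/(1-2*(G*m x/(c^2*x)))))/x :=
      (div_le_div_iff_of_pos_right hx0).2 (by linarith)
    calc DF x ≤ (f x * (2 - 2*(3*(G*m x/(c^2*x)) + 4*π*G*x^2*p x/c^4)/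
          (1-2*(G*m x/(c^2*x)))))/x := by rw [hDFdef]; exact h2
      _ = f x * Kf x := by rw [hKdef]; exact mul_div_assoc _ _ _
  -- continuity helpers
  have hUcont : ∀ x ∈ tovDomain R, ContinuousAt (fun y => G * m y / (c ^ 2 * y)) x := by
    intro x hx
    have hdm := (hTOV x hx).2.2.2.1
    have hx0 : 0 < x := hx.1
    exact (continuousAt_const.mul hdm.continuousAt).div
      (continuousAt_const.mul continuousAt_id) (by positivity)
  have hVcont : ∀ x ∈ tovDomain R, ContinuousAt (fun y => 4*π*G*y^2*p y/c^4) x := by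
    intro x hx
    have hdp := (hTOV x hx).2.2.2.2
    exact (((continuousAt_const.mul (continuousAt_id.pow 2)).mul hdp.continuousAt).div_const
      (c^4))
  have hKcont : ∀ x ∈ tovDomain R, ContinuousAt Kf x := by
    intro x hx
    have hx0 : 0 < x := hx.1
    have h12u : 1 - 2 * (G * m x / (c ^ 2 * x)) ≠ 0 := by
      have := h2u_lt x hx; linarith
    rw [hKdef]
    exact ((continuousAt_const.sub ((continuousAt_const.mul
        (((hUcont x hx).const_mul 3).add (hVcont x hx))).div
        (continuousAt_const.sub ((hUcont x hx).const_mul 2)) h12u))).div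
      continuousAt_id hx0.ne'
  have hCCcont : ∀ x ∈ tovDomain R, ContinuousAt CC x := by
    intro x hx
    have h12u : 1 - 2 * (G * m x / (c ^ 2 * x)) ≠ 0 := by
      have := h2u_lt x hx; linarith
    rw [hCCdef]
    exact ((continuousAt_const.mul (((hUcont x hx).const_mul 3).add (hVcont x hx))).sub
        continuousAt_const).add
      (((continuousAt_const.mul ((hUcont x hx).add (hVcont x hx))).mul
        (continuousAt_const.sub (((hUcont x hx).const_mul 3).add (hVcont x hx)))).div
        (continuousAt_const.sub ((hUcont x hx).const_mul 2)) h12u)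
  -- main argument
  intro rs hrs
  suffices h : f rs ≤ 0 by simpa only [hfdef] using h
  by_contra hcon
  push_neg at hcon
  -- find a point a below rs with f a < 0
  have t1 : Tendsto (fun x : ℝ => x^2) (𝓝[>](0:ℝ)) (𝓝 0) := by
    have h := (continuous_pow 2).tendsto (0:ℝ)
    simpa using h.mono_left nhdsWithin_le_nhds
  have tu : Tendsto (fun x => G * m x / (c ^ 2 * x)) (𝓝[>](0:ℝ)) (𝓝 0) := by
    have h := (hmlim.const_mul (G/c^2)).mul t1
    rw [mul_zero] at h
    apply h.congr'
    filter_upwards [self_mem_nhdsWithin] with x hx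
    have hx3 : (x:ℝ) ≠ 0 := ne_of_gt hx
    have hcne : c ≠ 0 := ne_of_gt hc
    field_simp
  have tv : Tendsto (fun x => 4*π*G*x^2*p x/c^4) (𝓝[>](0:ℝ)) (𝓝 0) := by
    have h := ((t1.const_mul (4*π*G)).mul hplim).div_const (c^4)
    rw [mul_zero, zero_mul, zero_div] at h
    apply h.congr'
    filter_upwards [self_mem_nhdsWithin] with x hx
    ring
  have tsum : Tendsto (fun x => G * m x / (c ^ 2 * x) + 4*π*G*x^2*p x/c^4)
      (𝓝[>](0:ℝ)) (𝓝 0) := by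
    have := tu.add tv; rwa [add_zero] at this
  have hsmall : ∀ᶠ x in 𝓝[>](0:ℝ),
      G * m x / (c ^ 2 * x) + 4*π*G*x^2*p x/c^4 < 2/9 :=
    tsum.eventually_lt_const (by norm_num)
  have hIoo : Ioo (0:ℝ) rs ∈ 𝓝[>](0:ℝ) :=
    Ioo_mem_nhdsGT_of_mem (Set.mem_Ico.2 ⟨le_refl 0, hrs.1⟩)
  obtain ⟨a, hasum, haI⟩ := (hsmall.and (eventually_of_mem hIoo fun x hx => hx)).exists
  have haDom : a ∈ tovDomain R := tovDomain_down hrs haI.1 haI.2.le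
  have hfa : f a < 0 := by
    rw [hfdef]
    exact buch_small_neg _ _ (hu_pos a haDom) (hv_pos a haDom) hasum
  -- the crossing point b
  have hfc : ContinuousOn f (Icc a rs) := by
    intro x hx
    exact (hderiv x (tovDomain_down hrs (lt_of_lt_of_le haI.1 hx.1) hx.2)).continuousAt.continuousWithinAt
  set S := {x | x ∈ Icc a rs ∧ f x ≤ 0} with hSdef
  have hScl : IsClosed S := by
    have : S = Icc a rs ∩ f ⁻¹' (Iic 0) := by ext x; simp [hSdef, and_comm]
    rw [this]
    exact hfc.preimage_isClosed_of_isClosed isClosed_Icc isClosed_Iic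
  have hScomp : IsCompact S :=
    isCompact_Icc.of_isClosed_subset hScl (fun x hx => hx.1)
  have hSne : S.Nonempty := ⟨a, ⟨Set.mem_Icc.2 ⟨le_refl a, haI.2.le⟩, hfa.le⟩⟩
  set b := sSup S with hbdef
  have hbS : b ∈ S := hScomp.sSup_mem hSne
  have hab : a ≤ b := hbS.1.1
  have hbr : b ≤ rs := hbS.1.2
  have hfb_le : f b ≤ 0 := hbS.2
  have hb0 : 0 < b := lt_of_lt_of_le haI.1 hab
  have hbDom : b ∈ tovDomain R := tovDomain_down hrs hb0 hbr
  have hblt : b < rs := lt_of_le_of_ne hbr (fun h => by rw [h] at hfb_le; linarith)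
  have hgt : ∀ x, b < x → x ≤ rs → 0 < f x := by
    intro x hbx hxr
    by_contra hfx
    push_neg at hfx
    have hxS : x ∈ S := ⟨Set.mem_Icc.2 ⟨le_trans hab hbx.le, hxr⟩, hfx⟩
    have := le_csSup hScomp.bddAbove hxS
    rw [← hbdef] at this
    linarith
  have hfb0 : f b = 0 := by
    refine le_antisymm hfb_le ?_
    have hct : Tendsto f (𝓝[>] b) (𝓝 (f b)) :=
      (hderiv b hbDom).continuousAt.continuousWithinAt
    refine ge_of_tendsto hct ?_
    filter_upwards [Ioo_mem_nhdsGT_of_mem (Set.mem_Ico.2 ⟨le_refl b, hblt⟩)] with x hx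
    exact (hgt x hx.1 hx.2.le).le
  -- CC is positive at b
  have hCCb : 0 < CC b := by
    have hfb' : (3*(G*m b/(c^2*b)) + 4*π*G*b^2*p b/c^4)^2
        = 4*(G*m b/(c^2*b)) + 2*(4*π*G*b^2*p b/c^4) := by
      have := hfb0
      rw [hfdef] at this
      simp only at this
      linarith [this]
    have hpos := buch_C_pos (G*m b/(c^2*b)) (4*π*G*b^2*p b/c^4)
      (hu_pos b hbDom) (hv_pos b hbDom) hfb'
    have h12u : 0 < 1 - 2 * (G * m b / (c ^ 2 * b)) := by
      have := h2u_lt b hbDom; linarith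
    rw [hCCdef]
    have heq := div_split (G*m b/(c^2*b)) (4*π*G*b^2*p b/c^4) h12u.ne'
    show (6*(3*(G*m b/(c^2*b)) + 4*π*G*b^2*p b/c^4) - 4 +
        2*((G*m b/(c^2*b)) + 4*π*G*b^2*p b/c^4)*(1-(3*(G*m b/(c^2*b)) + 4*π*G*b^2*p b/c^4))/
          (1-2*(G*m b/(c^2*b)))) > 0
    rw [heq]
    exact div_pos hpos h12u
  -- a small interval [b, d] where CC stays nonnegative
  have hev : {x | 0 < CC x} ∈ 𝓝 b := (hCCcont b hbDom) (Ioi_mem_nhds hCCb)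
  obtain ⟨ε, hε, hball⟩ := Metric.mem_nhds_iff.1 hev
  set d := min (b + ε/2) rs with hddef
  have hbd : b < d := lt_min (by linarith) hblt
  have hdr : d ≤ rs := min_le_right _ _
  have hsubIcc : Icc b d ⊆ tovDomain R := fun x hx =>
    tovDomain_down hrs (lt_of_lt_of_le hb0 hx.1) (le_trans hx.2 hdr)
  have hCCnn : ∀ x ∈ Icc b d, 0 ≤ CC x := by
    intro x hx
    apply le_of_lt
    apply hball
    rw [Metric.mem_ball, Real.dist_eq, abs_sub_lt_iff]
    constructor
    · have := le_trans hx.2 (min_le_left _ _); linarith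
    · linarith [hx.1]
  -- bound for Kf on [b, d]
  obtain ⟨κ, hκ⟩ := isCompact_Icc.exists_bound_of_continuousOn
    (fun x hx => (hKcont x (hsubIcc hx)).continuousWithinAt)
  -- Gronwall via the auxiliary function g
  set g : ℝ → ℝ := fun x => f x * Real.exp (-(κ * x)) with hgdef
  have hgd : ∀ x ∈ tovDomain R, HasDerivAt g
      (DF x * Real.exp (-(κ * x)) + f x * (Real.exp (-(κ * x)) * -(κ * 1))) x := by
    intro x hx
    exact (hderiv x hx).mul (((hasDerivAt_id x).const_mul κ).neg.exp)
  have hanti : AntitoneOn g (Icc b d) := by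
    apply antitoneOn_of_deriv_nonpos (convex_Icc b d)
    · intro x hx
      exact (hgd x (hsubIcc hx)).continuousAt.continuousWithinAt
    · intro x hx
      rw [interior_Icc] at hx
      exact (hgd x (hsubIcc (Ioo_subset_Icc_self hx))).differentiableAt.differentiableWithinAt
    · intro x hx
      rw [interior_Icc] at hx
      have hxIcc : x ∈ Icc b d := Ioo_subset_Icc_self hx
      have hxDom : x ∈ tovDomain R := hsubIcc hxIcc
      rw [(hgd x hxDom).deriv]
      have hfx : 0 ≤ f x := (hgt x hx.1 (le_trans hx.2.le hdr)).le
      have hd1 : DF x ≤ f x * Kf x := hDFle x hxDom (hCCnn x hxIcc) hfx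
      have hK : Kf x ≤ κ := by
        have := hκ x hxIcc
        rw [Real.norm_eq_abs] at this
        exact (abs_le.1 this).2
      have hE : 0 < Real.exp (-(κ * x)) := Real.exp_pos _
      have hd2 : DF x ≤ κ * f x := by
        calc DF x ≤ f x * Kf x := hd1
          _ ≤ f x * κ := mul_le_mul_of_nonneg_left hK hfx
          _ = κ * f x := mul_comm _ _
      nlinarith [mul_le_mul_of_nonneg_right hd2 hE.le]
  have hgb : g b = 0 := by rw [hgdef]; simp only; rw [hfb0, zero_mul]
  have hgd' : g d ≤ g b :=
    hanti (Set.mem_Icc.2 ⟨le_refl b, hbd.le⟩) (Set.mem_Icc.2 ⟨hbd.le, le_refl d⟩) hbd.le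
  have hfd : 0 < f d := hgt d hbd hdr
  rw [hgb, hgdef] at hgd'
  simp only at hgd'
  nlinarith [Real.exp_pos (-(κ * d)), hgd', hfd]

/-- **Buchdahl inequality.** For a regular TOV solution with
`dρ/dp ≥ 0`, setting `ℳ = Gm/(c²r)` and `𝒫 = 4πGr²p/c⁴`, one has
`(3ℳ + 𝒫)² ≤ 2(2ℳ + 𝒫)` for all `r`; in particular `ℳ ≤ 4/9`, and if the radius `R`
and total mass `M` are finite then `2GM/(c²R) ≤ 8/9`. -/
theorem stmt10
    (G c : ℝ) (hG : 0 < G) (hc : 0 < c)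
    (ρ : ℝ → ℝ) (hρ : IsBarotropic ρ)
    (m p : ℝ → ℝ) (R : ENNReal) (pc : ℝ)
    (hsol : IsRegularTOVSolution G c ρ m p R pc) :
    (∀ r ∈ tovDomain R,
      (3 * (G * m r / (c ^ 2 * r)) + 4 * Real.pi * G * r ^ 2 * p r / c ^ 4) ^ 2 ≤
        2 * (2 * (G * m r / (c ^ 2 * r)) + 4 * Real.pi * G * r ^ 2 * p r / c ^ 4) ∧
      G * m r / (c ^ 2 * r) ≤ 4 / 9) ∧
    (∀ M : ℝ, R ≠ ⊤ →
      Filter.Tendsto m (nhdsWithin R.toReal (Iio R.toReal)) (nhds M) →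
      2 * G * M / (c ^ 2 * R.toReal) ≤ 8 / 9) := by
  obtain ⟨⟨hTOV, _hmax⟩, hpc, hplim, hmlim⟩ := hsol
  have hkey := key_neg G c hG hc ρ m p R pc hρ hTOV hpc hplim hmlim
  have hpart1 : ∀ r ∈ tovDomain R,
      (3 * (G * m r / (c ^ 2 * r)) + 4 * Real.pi * G * r ^ 2 * p r / c ^ 4) ^ 2 ≤
        2 * (2 * (G * m r / (c ^ 2 * r)) + 4 * Real.pi * G * r ^ 2 * p r / c ^ 4) ∧
      G * m r / (c ^ 2 * r) ≤ 4 / 9 := by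
    intro r hr
    have h := hkey r hr
    obtain ⟨hp, hm, hlt, _, _⟩ := hTOV r hr
    have hr0 : 0 < r := hr.1
    have hu : 0 < G * m r / (c ^ 2 * r) := div_pos (mul_pos hG hm) (by positivity)
    have hv : 0 < 4 * Real.pi * G * r ^ 2 * p r / c ^ 4 :=
      div_pos (by positivity) (by positivity)
    exact ⟨by linarith, M_bound _ _ hu hv (by linarith)⟩
  refine ⟨hpart1, ?_⟩
  intro M hRtop hMlim
  rcases eq_or_lt_of_le (ENNReal.toReal_nonneg : (0:ℝ) ≤ R.toReal) with h0|h0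
  · rw [← h0]
    norm_num
  · have h9 : 9 * G * M ≤ 4 * c ^ 2 * R.toReal := by
      have htend : Tendsto (fun r => 9 * G * m r) (𝓝[<] R.toReal) (𝓝 (9 * G * M)) :=
        hMlim.const_mul (9 * G)
      refine le_of_tendsto htend ?_
      filter_upwards [Ioo_mem_nhdsLT_of_mem
        (Set.mem_Ioc.2 ⟨h0, le_refl R.toReal⟩)] with r hrI
      have hrDom : r ∈ tovDomain R := by
        refine ⟨hrI.1, ?_⟩
        calc ENNReal.ofReal r < ENNReal.ofReal R.toReal :=
              (ENNReal.ofReal_lt_ofReal_iff h0).2 hrI.2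
          _ = R := ENNReal.ofReal_toReal hRtop
      have hM49 := (hpart1 r hrDom).2
      have hr0 : 0 < r := hrI.1
      rw [div_le_iff₀ (by positivity : (0:ℝ) < c ^ 2 * r)] at hM49
      nlinarith [hM49, mul_nonneg (sq_nonneg c) (by linarith [hrI.2.le] : (0:ℝ) ≤ R.toReal - r)]
    rw [div_le_iff₀ (by positivity : (0:ℝ) < c ^ 2 * R.toReal)]
    linarith
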